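/- For every γ > 0 and every finite rectangle Λ ⊂ ℤ^d, almost surely (with respect to the i.i.d. uniform variables (u_x)_{x∈Λ} on [−1,1]) the matrix H(u) has 2|Λ| pairwise distinct eigenvalues, i.e., its spectrum is simple. -/

import Mathlib

open MeasureTheory Matrix Polynomial

/-- The uniform probability measure on `[-1,1]`. -/
noncomputable def unif : Measure ℝ :=
  ((2 : NNReal))⁻¹ • (volume.restrict (Set.Icc (-1 : ℝ) 1))

instance : IsProbabilityMeasure unif := by
  constructor
  rw [unif, Measure.smul_apply, Measure.restrict_apply_univ, Real.volume_Icc]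
  norm_num
  rw [ENNReal.smul_def]
  simp [ENNReal.inv_mul_cancel]

/-- The product of uniform measures on `[-1,1]^ι` (i.i.d. uniform random variables). -/
noncomputable def unifPi (ι : Type*) [Fintype ι] : Measure (ι → ℝ) :=
  Measure.pi fun _ => unif

/-- The ℓ¹ distance `|x-y| = Σᵢ |xᵢ-yᵢ|` on `ℤ^d`, as a natural number. -/
def dist1 {d : ℕ} (x y : Fin d → ℤ) : ℕ := ∑ i, (x i - y i).natAbs

/-- The random block Hamiltonian: diagonal 2×2 block `[[u_x,1],[1,-u_x]]` at each
position `x ∈ Λ`, and block `γ·I₂` between nearest-neighbor positions. -/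
noncomputable def Ham (d : ℕ) (γ : ℝ) (Λ : Finset (Fin d → ℤ)) (u : {x // x ∈ Λ} → ℝ) :
    Matrix ({x // x ∈ Λ} × Fin 2) ({x // x ∈ Λ} × Fin 2) ℝ := fun s t =>
  if s.1 = t.1 then
    (if s.2 = t.2 then (if s.2 = 0 then u s.1 else -u s.1) else 1)
  else if dist1 (s.1 : Fin d → ℤ) (t.1 : Fin d → ℤ) = 1 then
    (if s.2 = t.2 then γ else 0)
  else 0

instance : NullSingletonClass unif := by
  refine ⟨fun x => ?_⟩
  have h : (volume.restrict (Set.Icc (-1:ℝ) 1)) {x} = 0 := by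
    refine le_antisymm ?_ zero_le
    calc (volume.restrict (Set.Icc (-1:ℝ) 1)) {x} ≤ volume {x} :=
      Measure.restrict_apply_le _ _
    _ = 0 := measure_singleton x
  rw [unif, Measure.smul_apply, h, smul_zero]

lemma polyNullFin : ∀ (n : ℕ) (P : MvPolynomial (Fin n) ℝ), P ≠ 0 →
    (Measure.pi fun _ : Fin n => unif) {u | MvPolynomial.eval u P = 0} = 0 := by
  intro n
  induction n with
  | zero =>
    intro P hP
    have hc : MvPolynomial.coeff 0 P ≠ 0 := fun h => hP (by
      rw [MvPolynomial.eq_C_of_isEmpty P, h, map_zero])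
    have : {u : Fin 0 → ℝ | MvPolynomial.eval u P = 0} = ∅ := by
      ext u
      simp only [Set.mem_setOf_eq, Set.mem_empty_iff_false, iff_false]
      rw [MvPolynomial.eq_C_of_isEmpty P]
      simpa using hc
    rw [this, measure_empty]
  | succ n ih =>
    intro P hP
    set Q : Polynomial (MvPolynomial (Fin n) ℝ) := MvPolynomial.finSuccEquiv ℝ n P with hQdef
    have hQ0 : Q ≠ 0 := by
      simp only [hQdef, ne_eq, EmbeddingLike.map_eq_zero_iff]
      exact hP
    have hc : Q.leadingCoeff ≠ 0 := Polynomial.leadingCoeff_ne_zero.mpr hQ0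
    set N : Set (Fin n → ℝ) := {v | MvPolynomial.eval v Q.leadingCoeff = 0} with hNdef
    have hN : (Measure.pi fun _ : Fin n => unif) N = 0 := ih _ hc
    have hNm : MeasurableSet N :=
      ((MvPolynomial.continuous_eval _).measurable) (measurableSet_singleton 0)
    have hSm : MeasurableSet {u : Fin (n+1) → ℝ | MvPolynomial.eval u P = 0} :=
      ((MvPolynomial.continuous_eval _).measurable) (measurableSet_singleton 0)
    set e := MeasurableEquiv.piFinSuccAbove (fun _ : Fin (n+1) => ℝ) 0 with hedef
    have mp := measurePreserving_piFinSuccAbove (fun _ : Fin (n+1) => unif) 0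
    set T : Set (ℝ × (Fin n → ℝ)) := e.symm ⁻¹' {u | MvPolynomial.eval u P = 0} with hTdef
    have hTm : MeasurableSet T := e.symm.measurable hSm
    have key : (Measure.pi fun _ : Fin (n+1) => unif) {u | MvPolynomial.eval u P = 0}
        = (unif.prod (Measure.pi fun _ : Fin n => unif)) T := by
      rw [← mp.map_eq, MeasurableEquiv.map_apply]
      congr 1
      rw [hTdef, ← Set.preimage_comp, MeasurableEquiv.symm_comp_self, Set.preimage_id]
    have hTmem : ∀ x v, ((x, v) ∈ T ↔
        Polynomial.eval x (Q.map (MvPolynomial.eval v)) = 0) := by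
      intro x v
      have hsymm : (e.symm (x, v) : Fin (n+1) → ℝ) = Fin.cons x v := by
        simp [hedef, MeasurableEquiv.piFinSuccAbove, Fin.insertNthEquiv]
      show MvPolynomial.eval (e.symm (x, v)) P = 0 ↔ _
      rw [hsymm, MvPolynomial.eval_eq_eval_mv_eval']
    have h2 : (unif.prod (Measure.pi fun _ : Fin n => unif)) (Set.univ ×ˢ N) = 0 := by
      rw [Measure.prod_prod, hN, mul_zero]
    have h1 : (unif.prod (Measure.pi fun _ : Fin n => unif))
        (T ∩ (Set.univ ×ˢ N)ᶜ) = 0 := by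
      rw [Measure.prod_apply_symm (hTm.inter (MeasurableSet.univ.prod hNm).compl)]
      have hzero : ∀ v : Fin n → ℝ,
          unif ((fun x => (x, v)) ⁻¹' (T ∩ (Set.univ ×ˢ N)ᶜ)) = 0 := by
        intro v
        by_cases hv : v ∈ N
        · have : ((fun x => (x, v)) ⁻¹' (T ∩ (Set.univ ×ˢ N)ᶜ)) = ∅ := by
            ext x
            simp [hv]
          rw [this, measure_empty]
        · have hq : Q.map (MvPolynomial.eval v) ≠ 0 := by
            intro h
            apply hv
            have := congrArg (fun p => Polynomial.coeff p Q.natDegree) h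
            show MvPolynomial.eval v Q.leadingCoeff = 0
            simpa [Polynomial.coeff_map] using this
          refine measure_mono_null ?_
            ((Polynomial.finite_setOf_isRoot hq).measure_zero unif)
          intro x hx
          have := ((hTmem x v).mp hx.1)
          exact this
      simp only [hzero, lintegral_zero]
    refine key ▸ measure_mono_null (fun p hp => ?_) (measure_union_null h1 h2)
    by_cases hmem : p ∈ Set.univ ×ˢ N
    · exact Or.inr hmem
    · exact Or.inl ⟨hp, hmem⟩

lemma polyNull (ι : Type*) [Fintype ι] (P : MvPolynomial ι ℝ) (hP : P ≠ 0) :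
    (Measure.pi fun _ : ι => unif) {u | MvPolynomial.eval u P = 0} = 0 := by
  classical
  set n := Fintype.card ι
  set f : Fin n ≃ ι := (Fintype.equivFin ι).symm with hfdef
  have mp := measurePreserving_piCongrLeft (fun _ : ι => unif) f
  have hSm : MeasurableSet {u : ι → ℝ | MvPolynomial.eval u P = 0} :=
    ((MvPolynomial.continuous_eval _).measurable) (measurableSet_singleton 0)
  rw [← mp.map_eq, MeasurableEquiv.map_apply]
  have happ : ∀ (w : Fin n → ℝ) (x : ι),
      (MeasurableEquiv.piCongrLeft (fun _ : ι => ℝ) f) w x = w (f.symm x) := by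
    intro w x
    simp [MeasurableEquiv.piCongrLeft, Equiv.piCongrLeft]
  have : (MeasurableEquiv.piCongrLeft (fun _ : ι => ℝ) f) ⁻¹'
      {u : ι → ℝ | MvPolynomial.eval u P = 0}
      = {w : Fin n → ℝ | MvPolynomial.eval w (MvPolynomial.rename f.symm P) = 0} := by
    ext w
    simp only [Set.mem_preimage, Set.mem_setOf_eq, MvPolynomial.eval_rename]
    rw [show ((MeasurableEquiv.piCongrLeft (fun _ : ι => ℝ) f) w : ι → ℝ) = w ∘ f.symm
      from funext (happ w)]
  rw [this]
  exact polyNullFin n _ fun h => hP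
    (MvPolynomial.rename_injective _ f.symm.injective (by rw [h, map_zero]))

section AlgAux
variable {ι : Type*} [Fintype ι] [DecidableEq ι]

lemma det_traceForm {N : ℕ} (μ : Fin N → ℝ) :
    (Matrix.of fun i j : Fin N => ∑ k, μ k ^ ((i : ℕ) + (j : ℕ))).det
      = ((vandermonde μ).det) ^ 2 := by
  have h : (Matrix.of fun i j : Fin N => ∑ k, μ k ^ ((i : ℕ) + (j : ℕ)))
      = (vandermonde μ)ᵀ * vandermonde μ := by
    ext i j
    simp [Matrix.mul_apply, vandermonde, pow_add]
  rw [h, det_mul, det_transpose, sq]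

lemma conjPow {U D V : Matrix ι ι ℝ} (h1 : U * V = 1) (h2 : V * U = 1) (k : ℕ) :
    (U * D * V) ^ k = U * D ^ k * V := by
  induction k with
  | zero => rw [pow_zero, pow_zero, mul_one, h1]
  | succ k ih =>
    rw [pow_succ, ih, pow_succ]
    simp only [Matrix.mul_assoc]
    rw [← Matrix.mul_assoc V U, h2, one_mul]

lemma trace_conj_pow {U D V : Matrix ι ι ℝ} (h1 : U * V = 1) (h2 : V * U = 1) (k : ℕ) :
    ((U * D * V) ^ k).trace = (D ^ k).trace := by
  rw [conjPow h1 h2, trace_mul_cycle, h2, one_mul]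

lemma charpoly_conj {U D V : Matrix ι ι ℝ} (h1 : U * V = 1) (h2 : V * U = 1) :
    (U * D * V).charpoly = D.charpoly := by
  have hUV : (U.map (C : ℝ →+* ℝ[X]) : Matrix ι ι ℝ[X]) * V.map C = 1 := by
    rw [← Matrix.map_mul, h1, Matrix.map_one _ (map_zero _) (map_one _)]
  have hmain : charmatrix (U * D * V) = U.map C * charmatrix D * V.map C := by
    rw [charmatrix, charmatrix, mul_sub, sub_mul]
    congr 1
    · rw [← (scalar_commute (X : ℝ[X]) (Commute.all _) (U.map C)).eq, Matrix.mul_assoc, hUV,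
        mul_one]
    · rw [RingHom.mapMatrix_apply, RingHom.mapMatrix_apply, Matrix.map_mul, Matrix.map_mul]
  rw [Matrix.charpoly, Matrix.charpoly, hmain, det_mul, det_mul, mul_right_comm,
    ← det_mul, hUV, det_one, one_mul]

lemma charpoly_diag (d : ι → ℝ) :
    (diagonal d).charpoly = ∏ i, (X - C (d i)) := by
  have h : charmatrix (diagonal d) = diagonal fun i => X - C (d i) := by
    refine Matrix.ext fun i j => ?_
    by_cases hij : i = j
    · subst hij
      simp [charmatrix_apply_eq]
    · rw [charmatrix_apply_ne _ _ _ hij, diagonal_apply_ne _ hij, diagonal_apply_ne _ hij,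
        map_zero, neg_zero]
  rw [Matrix.charpoly, h, det_diagonal]

lemma herm_trace_pow (A : Matrix ι ι ℝ) (hA : A.IsHermitian) (k : ℕ) :
    (A ^ k).trace = ∑ i, hA.eigenvalues i ^ k := by
  have h1 : (hA.eigenvectorUnitary : Matrix ι ι ℝ) * star (hA.eigenvectorUnitary : Matrix ι ι ℝ) = 1 :=
    mem_unitaryGroup_iff.mp hA.eigenvectorUnitary.2
  have h2 : star (hA.eigenvectorUnitary : Matrix ι ι ℝ) * (hA.eigenvectorUnitary : Matrix ι ι ℝ) = 1 :=
    mem_unitaryGroup_iff'.mp hA.eigenvectorUnitary.2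
  conv_lhs => rw [hA.spectral_theorem, Unitary.conjStarAlgAut_apply]
  rw [trace_conj_pow h1 h2, diagonal_pow, trace_diagonal]
  simp [Pi.pow_apply]

lemma herm_charpoly (A : Matrix ι ι ℝ) (hA : A.IsHermitian) :
    A.charpoly = ∏ i, (X - C (hA.eigenvalues i)) := by
  have h1 : (hA.eigenvectorUnitary : Matrix ι ι ℝ) * star (hA.eigenvectorUnitary : Matrix ι ι ℝ) = 1 :=
    mem_unitaryGroup_iff.mp hA.eigenvectorUnitary.2
  have h2 : star (hA.eigenvectorUnitary : Matrix ι ι ℝ) * (hA.eigenvectorUnitary : Matrix ι ι ℝ) = 1 :=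
    mem_unitaryGroup_iff'.mp hA.eigenvectorUnitary.2
  conv_lhs => rw [hA.spectral_theorem, Unitary.conjStarAlgAut_apply]
  rw [charpoly_conj h1 h2]
  have : (RCLike.ofReal ∘ hA.eigenvalues : ι → ℝ) = hA.eigenvalues := by
    ext i; simp
  rw [this, charpoly_diag]

lemma card_roots_prod (ev : ι → ℝ) (hinj : Function.Injective ev) :
    (∏ i, (X - C (ev i))).roots.toFinset.card = Fintype.card ι := by
  have h : ∏ i, (X - C (ev i))
      = (Multiset.map (fun a => X - C a) (Finset.univ.val.map ev)).prod := by
    rw [Multiset.map_map]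
    rfl
  rw [h, Polynomial.roots_multiset_prod_X_sub_C, Multiset.toFinset_map, Finset.val_toFinset,
    Finset.card_image_of_injective _ hinj, Finset.card_univ]

end AlgAux

section MainAux

variable {d : ℕ} {γ : ℝ} {Λ : Finset (Fin d → ℤ)}

lemma dist1_comm (x y : Fin d → ℤ) : dist1 x y = dist1 y x := by
  unfold dist1
  exact Finset.sum_congr rfl fun i _ => by rw [← Int.natAbs_neg]; ring_nf

lemma ham_isHermitian (u : {x // x ∈ Λ} → ℝ) : (Ham d γ Λ u).IsHermitian := by
  refine Matrix.ext fun s t => ?_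
  show star (Ham d γ Λ u t s) = Ham d γ Λ u s t
  rw [star_trivial]
  unfold Ham
  by_cases h1 : s.1 = t.1
  · by_cases h2 : s.2 = t.2
    · simp [h1, h2]
    · simp [h1, h2, Ne.symm h2]
  · rw [if_neg h1, if_neg (Ne.symm h1), dist1_comm]
    by_cases hd1 : dist1 (s.1 : Fin d → ℤ) (t.1 : Fin d → ℤ) = 1
    · by_cases h2 : s.2 = t.2
      · simp [hd1, h2]
      · simp [hd1, h2, Ne.symm h2]
    · simp [hd1]

/-- extension of `u` to the doubled index set, with signs -/
def wext (u : {x // x ∈ Λ} → ℝ) : {x // x ∈ Λ} × Fin 2 → ℝ :=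
  fun s => if s.2 = 0 then u s.1 else -u s.1

lemma ham_decomp (u : {x // x ∈ Λ} → ℝ) :
    Ham d γ Λ u = Matrix.diagonal (wext u) + Ham d γ Λ (fun _ => 0) := by
  refine Matrix.ext fun s t => ?_
  show _ = Matrix.diagonal (wext u) s t + _
  by_cases hst : s = t
  · subst hst
    rw [Matrix.diagonal_apply_eq]
    unfold Ham wext
    simp
  · rw [Matrix.diagonal_apply_ne _ hst, zero_add]
    unfold Ham
    by_cases h1 : s.1 = t.1
    · have h2 : s.2 ≠ t.2 := fun h => hst (Prod.ext h1 h)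
      simp [h1, h2]
    · simp [h1]

end MainAux

section Main

variable (d : ℕ) (γ : ℝ) (Λ : Finset (Fin d → ℤ))

/-- the Hamiltonian with polynomial entries -/
noncomputable def HamP :
    Matrix ({x // x ∈ Λ} × Fin 2) ({x // x ∈ Λ} × Fin 2) (MvPolynomial {x // x ∈ Λ} ℝ) :=
  fun s t =>
    if s.1 = t.1 then
      (if s.2 = t.2 then (if s.2 = 0 then MvPolynomial.X s.1 else -MvPolynomial.X s.1) else 1)
    else if dist1 (s.1 : Fin d → ℤ) (t.1 : Fin d → ℤ) = 1 then
      (if s.2 = t.2 then MvPolynomial.C γ else 0)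
    else 0

lemma hamP_map (u : {x // x ∈ Λ} → ℝ) :
    (HamP d γ Λ).map (MvPolynomial.eval u) = Ham d γ Λ u := by
  refine Matrix.ext fun s t => ?_
  show MvPolynomial.eval u (HamP d γ Λ s t) = Ham d γ Λ u s t
  unfold HamP Ham
  split_ifs <;> simp

/-- the discriminant-like polynomial -/
noncomputable def Pdet : MvPolynomial {x // x ∈ Λ} ℝ :=
  (Matrix.of fun i j : Fin (2 * Λ.card) =>
    ((HamP d γ Λ) ^ ((i : ℕ) + (j : ℕ))).trace).det

lemma trace_pow_eval (u : {x // x ∈ Λ} → ℝ) (k : ℕ) :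
    MvPolynomial.eval u (((HamP d γ Λ) ^ k).trace) = ((Ham d γ Λ u) ^ k).trace := by
  have h1 : (((HamP d γ Λ) ^ k).map (MvPolynomial.eval u)) = (Ham d γ Λ u) ^ k := by
    rw [← RingHom.mapMatrix_apply, map_pow, RingHom.mapMatrix_apply, hamP_map]
  calc MvPolynomial.eval u (((HamP d γ Λ) ^ k).trace)
      = (((HamP d γ Λ) ^ k).map (MvPolynomial.eval u)).trace := by
        rw [Matrix.trace, Matrix.trace, map_sum]; rfl
  _ = _ := by rw [h1]

lemma Pdet_eval (u : {x // x ∈ Λ} → ℝ) :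
    MvPolynomial.eval u (Pdet d γ Λ) =
      (Matrix.of fun i j : Fin (2 * Λ.card) =>
        ((Ham d γ Λ u) ^ ((i : ℕ) + (j : ℕ))).trace).det := by
  rw [Pdet, RingHom.map_det]
  congr 1
  refine Matrix.ext fun i j => ?_
  exact trace_pow_eval d γ Λ u _

end Main

section NonVanishing

variable (d : ℕ) (γ : ℝ) (Λ : Finset (Fin d → ℤ))

lemma Pdet_ne_zero : Pdet d γ Λ ≠ 0 := by
  classical
  have hcard : Fintype.card ({x // x ∈ Λ} × Fin 2) = 2 * Λ.card := by
    rw [Fintype.card_prod, Fintype.card_coe, Fintype.card_fin, mul_comm]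
  let e : Fin (2 * Λ.card) ≃ {x // x ∈ Λ} × Fin 2 := (Fintype.equivFinOfCardEq hcard).symm
  -- a sign-injective vector
  let w : {x // x ∈ Λ} → ℝ := fun x => ((Fintype.equivFin _ x : ℕ) : ℝ) + 1
  have hwpos : ∀ x, 0 < w x := fun x => by positivity
  have hwinj : Function.Injective w := by
    intro a b hab
    have h : ((Fintype.equivFin _ a : ℕ) : ℝ) = ((Fintype.equivFin _ b : ℕ) : ℝ) := by
      simpa [w] using hab
    exact (Fintype.equivFin _).injective (Fin.ext (by exact_mod_cast h))
  have hwextinj : Function.Injective (wext (Λ := Λ) w) := by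
    rintro ⟨x, i⟩ ⟨y, j⟩ h
    unfold wext at h
    have hx := hwpos x
    have hy := hwpos y
    fin_cases i <;> fin_cases j <;> simp at h
    · simp [hwinj h]
    · exact absurd h (by intro hc; rw [hc] at hx; linarith)
    · exact absurd h (by intro hc; rw [← hc] at hy; linarith)
    · simp [hwinj h]
  set B := Ham d γ Λ (fun _ => 0) with hB
  set U := Matrix.diagonal (wext (Λ := Λ) w) with hU
  have hdiagtrace : ∀ k : ℕ,
      (U ^ k).trace = ∑ i : Fin (2 * Λ.card), (wext (Λ := Λ) w (e i)) ^ k := by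
    intro k
    rw [hU, Matrix.diagonal_pow, Matrix.trace_diagonal,
      ]
    simp only [Pi.pow_apply]
    rw [← Equiv.sum_comp e (fun t => wext (Λ := Λ) w t ^ k)]
  set F : ℝ → ℝ := fun s =>
    (Matrix.of fun i j : Fin (2 * Λ.card) =>
      ((U + s • B) ^ ((i : ℕ) + (j : ℕ))).trace).det with hF
  have hFcont : Continuous F := by
    apply Continuous.matrix_det
    apply continuous_matrix
    intro i j
    apply Continuous.matrix_trace
    exact (continuous_const.add (continuous_id.smul continuous_const)).pow _
  have hF0 : F 0 ≠ 0 := by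
    have h : F 0 = ((Matrix.vandermonde (wext (Λ := Λ) w ∘ e)).det) ^ 2 := by
      rw [hF]
      simp only [zero_smul, add_zero]
      rw [← det_traceForm (wext (Λ := Λ) w ∘ e)]
      congr 1
      refine Matrix.ext fun i j => ?_
      simpa using hdiagtrace ((i : ℕ) + (j : ℕ))
    rw [h]
    exact pow_ne_zero _ (Matrix.det_vandermonde_ne_zero_iff.mpr (hwextinj.comp e.injective))
  have hex : ∃ s : ℝ, s ≠ 0 ∧ F s ≠ 0 := by
    have hev : ∀ᶠ s in nhds (0 : ℝ), F s ≠ 0 := hFcont.continuousAt.eventually_ne hF0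
    obtain ⟨s, hs⟩ := ((hev.filter_mono (nhdsWithin_le_nhds (s := {(0:ℝ)}ᶜ))).and
      self_mem_nhdsWithin).exists
    exact ⟨s, by simpa using hs.2, hs.1⟩
  obtain ⟨s, hs0, hFs⟩ := hex
  set u₁ : {x // x ∈ Λ} → ℝ := fun x => s⁻¹ * w x with hu₁
  have hwext1 : wext (Λ := Λ) u₁ = fun t => s⁻¹ * wext (Λ := Λ) w t := by
    funext t
    unfold wext
    rw [hu₁]
    split_ifs <;> ring
  have hham1 : Ham d γ Λ u₁ = s⁻¹ • (U + s • B) := by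
    rw [ham_decomp u₁, hwext1, smul_add, smul_smul, inv_mul_cancel₀ hs0, one_smul, hU, hB]
    congr 1
    rw [← Matrix.diagonal_smul]
    congr 1
  have hval : MvPolynomial.eval u₁ (Pdet d γ Λ) ≠ 0 := by
    rw [Pdet_eval]
    have hpow : ∀ k : ℕ, ((Ham d γ Λ u₁) ^ k).trace = s⁻¹ ^ k * (((U + s • B) ^ k).trace) := by
      intro k
      rw [hham1, _root_.smul_pow, Matrix.trace_smul, smul_eq_mul]
    have hmat : (Matrix.of fun i j : Fin (2 * Λ.card) =>
        ((Ham d γ Λ u₁) ^ ((i : ℕ) + (j : ℕ))).trace)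
        = Matrix.diagonal (fun i : Fin (2 * Λ.card) => s⁻¹ ^ (i : ℕ)) *
          (Matrix.of fun i j : Fin (2 * Λ.card) =>
            (((U + s • B) ^ ((i : ℕ) + (j : ℕ))).trace)) *
          Matrix.diagonal (fun j : Fin (2 * Λ.card) => s⁻¹ ^ (j : ℕ)) := by
      refine Matrix.ext fun i j => ?_
      rw [Matrix.mul_diagonal, Matrix.diagonal_mul]
      show ((Ham d γ Λ u₁) ^ ((i : ℕ) + (j : ℕ))).trace = _
      rw [hpow, pow_add]
      simp only [Matrix.of_apply]
      ring
    rw [hmat, Matrix.det_mul, Matrix.det_mul, Matrix.det_diagonal]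
    refine mul_ne_zero (mul_ne_zero ?_ ?_) ?_
    · exact Finset.prod_ne_zero_iff.mpr fun i _ => pow_ne_zero _ (inv_ne_zero hs0)
    · exact hFs
    · exact Finset.prod_ne_zero_iff.mpr fun i _ => pow_ne_zero _ (inv_ne_zero hs0)
  exact fun h => hval (by rw [h, map_zero])

end NonVanishing


/-- almost surely, `H(u)` has `2|Λ|` pairwise distinct (real) eigenvalues,
i.e. its characteristic polynomial has `2|Λ|` distinct roots: the spectrum is simple. -/
theorem spectrum_simple (d : ℕ) (hd : 1 ≤ d) (γ : ℝ) (hγ : 0 < γ)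
    (Λ : Finset (Fin d → ℤ)) (hrect : ∃ a b, Λ = Finset.Icc a b) :
    ∀ᵐ u ∂(unifPi {x // x ∈ Λ}),
      (Ham d γ Λ u).charpoly.roots.toFinset.card = 2 * Λ.card := by
    classical
  have hcard : Fintype.card ({x // x ∈ Λ} × Fin 2) = 2 * Λ.card := by
    rw [Fintype.card_prod, Fintype.card_coe, Fintype.card_fin, mul_comm]
  let e : Fin (2 * Λ.card) ≃ {x // x ∈ Λ} × Fin 2 := (Fintype.equivFinOfCardEq hcard).symm
  have hnull := polyNull _ _ (Pdet_ne_zero d γ Λ)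
  rw [ae_iff]
  refine measure_mono_null ?_ hnull
  intro u hu
  simp only [Set.mem_setOf_eq] at hu ⊢
  by_contra hne
  apply hu
  have hA := ham_isHermitian (d := d) (γ := γ) u
  have htr : ∀ k : ℕ, ((Ham d γ Λ u) ^ k).trace
      = ∑ i : Fin (2 * Λ.card), (hA.eigenvalues (e i)) ^ k := by
    intro k
    rw [herm_trace_pow _ hA, ← Equiv.sum_comp e (fun t => hA.eigenvalues t ^ k)]
  have hD : MvPolynomial.eval u (Pdet d γ Λ)
      = ((Matrix.vandermonde (hA.eigenvalues ∘ e)).det) ^ 2 := by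
    rw [Pdet_eval, ← det_traceForm]
    congr 1
    refine Matrix.ext fun i j => ?_
    simpa using htr ((i : ℕ) + (j : ℕ))
  have hvdm : (Matrix.vandermonde (hA.eigenvalues ∘ e)).det ≠ 0 := by
    intro h
    exact hne (by rw [hD, h]; ring)
  have hinj : Function.Injective (hA.eigenvalues ∘ e) :=
    Matrix.det_vandermonde_ne_zero_iff.mp hvdm
  have hinj' : Function.Injective hA.eigenvalues := by
    intro a b hab
    have hcomp : (hA.eigenvalues ∘ e) (e.symm a) = (hA.eigenvalues ∘ e) (e.symm b) := by
      simp only [Function.comp_apply, Equiv.apply_symm_apply]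
      exact hab
    have h := hinj hcomp
    simpa using congrArg e h
  rw [herm_charpoly _ hA, card_roots_prod _ hinj', hcard]
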